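/- Let n ≥ 2 and let q_1, …, q_n : ℝ → ℍ be differentiable curves with Σ_{i=1}^n |q_i(t)|² = 1 and q_n(t) ≠ 0 for all t. Define w_i(t) := q_i(t) q_n(t)^{−1} for 1 ≤ i ≤ n−1. Then for every t, Σ_{i=1}^{n−1} ( \overline{w_i(t)} w'_i(t) − \overline{w'_i(t)} w_i(t) ) = Σ_{i=1}^{n} \overline{q_n(t)}^{−1} ( \overline{q_i(t)} q'_i(t) − \overline{q'_i(t)} q_i(t) ) q_n(t)^{−1} − |q_n(t)|^{−2} ( q'_n(t) q_n(t)^{−1} − \overline{q_n(t)}^{−1} \overline{q'_n(t)} ). -/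

import Mathlib

open Quaternion

theorem key_abstract {A : Type*} [Ring A] [Algebra ℝ A] (P c a b u v e f : A)
    (α β : ℝ) (hu : u * a = α • 1) (hPc : P * c = β • 1) :
    (P * u) * (b * c + a * -(c * e * c)) - (P * v + -(P * f * P) * u) * (a * c)
      = P * (u * b - v * a) * c - (α * β) • (e * c - P * f) := by
  have e1 : (P * u) * (b * c + a * -(c * e * c)) - (P * v + -(P * f * P) * u) * (a * c)
      = P * (u * b) * c - (P * (u * a)) * (c * (e * c)) - P * (v * a) * c
        + ((P * f) * (P * (u * a))) * c := by noncomm_ring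
  rw [e1, hu]
  simp only [Algebra.mul_smul_comm, Algebra.smul_mul_assoc, mul_one, smul_sub, smul_smul]
  rw [← mul_assoc P c, mul_assoc (P * f) P c, hPc]
  simp only [Algebra.mul_smul_comm, Algebra.smul_mul_assoc, mul_one, smul_smul]
  simp only [one_mul, mul_comm α β]
  noncomm_ring

theorem key_quat (Q Q' a b : ℍ[ℝ]) :
    star (a * Q⁻¹) * (b * Q⁻¹ + a * -(Q⁻¹ * Q' * Q⁻¹)) -
      star (b * Q⁻¹ + a * -(Q⁻¹ * Q' * Q⁻¹)) * (a * Q⁻¹)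
    = (star Q)⁻¹ * (star a * b - star b * a) * Q⁻¹
      - (‖a‖ ^ 2 * (‖Q‖ ^ 2)⁻¹) • (Q' * Q⁻¹ - (star Q)⁻¹ * star Q') := by
  have hu : star a * a = (‖a‖ ^ 2 : ℝ) • (1 : ℍ[ℝ]) := by
    rw [star_mul_self, sq, ← Quaternion.normSq_eq_norm_mul_self, ← Quaternion.coe_one,
      Quaternion.smul_coe, mul_one]
  have hPc : (star Q)⁻¹ * Q⁻¹ = ((‖Q‖ ^ 2)⁻¹ : ℝ) • (1 : ℍ[ℝ]) := by
    rw [← mul_inv_rev, self_mul_star, ← Quaternion.coe_inv, sq,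
      ← Quaternion.normSq_eq_norm_mul_self, ← Quaternion.coe_one, Quaternion.smul_coe, mul_one]
  have hstar : star (a * Q⁻¹) * (b * Q⁻¹ + a * -(Q⁻¹ * Q' * Q⁻¹)) -
      star (b * Q⁻¹ + a * -(Q⁻¹ * Q' * Q⁻¹)) * (a * Q⁻¹)
    = ((star Q)⁻¹ * star a) * (b * Q⁻¹ + a * -(Q⁻¹ * Q' * Q⁻¹))
      - ((star Q)⁻¹ * star b + -((star Q)⁻¹ * star Q' * (star Q)⁻¹) * star a) * (a * Q⁻¹) := by
    simp only [star_add, star_mul, star_neg, star_inv₀]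
    noncomm_ring
  rw [hstar, key_abstract _ _ _ _ _ _ _ _ _ _ hu hPc]

theorem area_form_affine_identity (n : ℕ) (hn : 2 ≤ n)
    (q : Fin n → ℝ → ℍ[ℝ]) (hq : ∀ i, Differentiable ℝ (q i))
    (lst : Fin n) (hlst : lst.val = n - 1)
    (hnorm : ∀ t, ∑ i, ‖q i t‖ ^ 2 = 1) (hne : ∀ t, q lst t ≠ 0)
    (w : Fin (n - 1) → ℝ → ℍ[ℝ])
    (hw : ∀ (i : Fin (n - 1)) (t : ℝ),
      w i t = q ⟨i.val, lt_of_lt_of_le i.isLt (Nat.sub_le n 1)⟩ t * (q lst t)⁻¹)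
    (t : ℝ) :
    ∑ i : Fin (n - 1),
        (star (w i t) * deriv (w i) t - star (deriv (w i) t) * w i t)
      = (∑ i : Fin n, (star (q lst t))⁻¹ *
            (star (q i t) * deriv (q i) t - star (deriv (q i) t) * q i t) *
            (q lst t)⁻¹)
        - (‖q lst t‖ ^ 2)⁻¹ •
            (deriv (q lst) t * (q lst t)⁻¹ -
              (star (q lst t))⁻¹ * star (deriv (q lst) t)) := by
  obtain ⟨m, rfl⟩ : ∃ m, n = m + 1 := ⟨n - 1, by omega⟩
  have hlst' : lst = Fin.last m := Fin.ext (by simpa using hlst)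
  subst hlst'
  set Q : ℍ[ℝ] := q (Fin.last m) t with hQdef
  set Q' : ℍ[ℝ] := deriv (q (Fin.last m)) t with hQ'def
  have hQne : Q ≠ 0 := hne t
  -- derivative of the inverse curve
  have hinv : HasDerivAt (fun s => (q (Fin.last m) s)⁻¹) (-(Q⁻¹ * Q' * Q⁻¹)) t := by
    have h1 := (hasFDerivAt_inv' (𝕜 := ℝ) hQne).comp_hasDerivAt t
      ((hq (Fin.last m) t).hasDerivAt)
    simp at h1
    exact h1
  -- derivatives of the w i
  have hwd : ∀ i : Fin (m + 1 - 1),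
      deriv (w i) t = deriv (q ⟨i.val, lt_of_lt_of_le i.isLt (Nat.sub_le (m+1) 1)⟩) t * Q⁻¹
        + q ⟨i.val, lt_of_lt_of_le i.isLt (Nat.sub_le (m+1) 1)⟩ t * -(Q⁻¹ * Q' * Q⁻¹) := by
    intro i
    have hfun : w i = fun s => q ⟨i.val, lt_of_lt_of_le i.isLt (Nat.sub_le (m+1) 1)⟩ s *
        (q (Fin.last m) s)⁻¹ := funext (hw i)
    rw [hfun]
    exact (((hq _ t).hasDerivAt).mul hinv).deriv
  -- rewrite each summand via key_quat
  have hsum : ∀ i : Fin (m + 1 - 1),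
      star (w i t) * deriv (w i) t - star (deriv (w i) t) * w i t
        = (star Q)⁻¹ * (star (q ⟨i.val, lt_of_lt_of_le i.isLt (Nat.sub_le (m+1) 1)⟩ t) *
              deriv (q ⟨i.val, lt_of_lt_of_le i.isLt (Nat.sub_le (m+1) 1)⟩) t
            - star (deriv (q ⟨i.val, lt_of_lt_of_le i.isLt (Nat.sub_le (m+1) 1)⟩) t) *
              q ⟨i.val, lt_of_lt_of_le i.isLt (Nat.sub_le (m+1) 1)⟩ t) * Q⁻¹
          - (‖q ⟨i.val, lt_of_lt_of_le i.isLt (Nat.sub_le (m+1) 1)⟩ t‖ ^ 2 * (‖Q‖ ^ 2)⁻¹) •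
              (Q' * Q⁻¹ - (star Q)⁻¹ * star Q') := by
    intro i
    rw [hw i t, hwd i]
    exact key_quat Q Q' _ _
  rw [Finset.sum_congr rfl (fun i _ => hsum i)]
  rw [Finset.sum_sub_distrib, ← Finset.sum_smul]
  have h1 : ∑ i : Fin (m + 1 - 1), (star Q)⁻¹ *
        (star (q ⟨i.val, lt_of_lt_of_le i.isLt (Nat.sub_le (m+1) 1)⟩ t) *
            deriv (q ⟨i.val, lt_of_lt_of_le i.isLt (Nat.sub_le (m+1) 1)⟩) t -
          star (deriv (q ⟨i.val, lt_of_lt_of_le i.isLt (Nat.sub_le (m+1) 1)⟩) t) *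
            q ⟨i.val, lt_of_lt_of_le i.isLt (Nat.sub_le (m+1) 1)⟩ t) * Q⁻¹
      = ∑ i : Fin m, (star Q)⁻¹ *
          (star (q (Fin.castSucc i) t) * deriv (q (Fin.castSucc i)) t -
            star (deriv (q (Fin.castSucc i)) t) * q (Fin.castSucc i) t) * Q⁻¹ := rfl
  have h2 : ∑ i : Fin (m + 1 - 1),
        ‖q ⟨i.val, lt_of_lt_of_le i.isLt (Nat.sub_le (m+1) 1)⟩ t‖ ^ 2 * (‖Q‖ ^ 2)⁻¹
      = (∑ i : Fin m, ‖q (Fin.castSucc i) t‖ ^ 2) * (‖Q‖ ^ 2)⁻¹ := by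
    rw [← Finset.sum_mul]
    rfl
  rw [h1, h2]
  have hs : (‖Q‖ ^ 2 : ℝ) ≠ 0 := pow_ne_zero 2 (norm_ne_zero_iff.mpr hQne)
  have hnorm2 : ∑ i : Fin m, ‖q (Fin.castSucc i) t‖ ^ 2 = 1 - ‖Q‖ ^ 2 := by
    have := hnorm t
    rw [Fin.sum_univ_castSucc] at this
    linarith
  rw [hnorm2]
  have hQs : star Q ≠ 0 := star_ne_zero.mpr hQne
  have hE : (star Q)⁻¹ * (star Q * Q' - star Q' * Q) * Q⁻¹
      = Q' * Q⁻¹ - (star Q)⁻¹ * star Q' := by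
    rw [mul_sub, sub_mul, ← mul_assoc, inv_mul_cancel₀ hQs, one_mul,
      ← mul_assoc, mul_assoc ((star Q)⁻¹ * star Q'), mul_inv_cancel₀ hQne, mul_one]
  rw [Fin.sum_univ_castSucc (n := m) (f := fun i => (star Q)⁻¹ *
      (star (q i t) * deriv (q i) t - star (deriv (q i) t) * q i t) * Q⁻¹)]
  rw [hE]
  have hscal : (1 - ‖Q‖ ^ 2) * (‖Q‖ ^ 2)⁻¹ = (‖Q‖ ^ 2)⁻¹ - 1 := by
    field_simp
  rw [hscal, sub_smul, one_smul]
  abel
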